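/- Let R be a commutative Noetherian integral domain, n a positive integer, and M a finitely generated R[n]-module. Then M is torsion free if and only if M^{(1)} = {m ∈ M : t m = 0} is torsion free. Moreover, if M is torsion free, then for every 1 ≤ i ≤ n the modules G^{(i)}(M) = M^{(i)}/M^{(i-1)} and M/M^{(i)} are torsion free, where M^{(i)} = {m ∈ M : t^i m = 0}. -/

import Mathlib

open Polynomial

noncomputable section

/-- The primitive multiple ring `R[n] = R[t]/(t^n)`. -/
abbrev Rn (R : Type*) [CommRing R] (n : ℕ) : Type _ :=
  Polynomial R ⧸ Ideal.span {(X : Polynomial R) ^ n}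

/-- The class `t` of the variable in `R[n]`. -/
def tn (R : Type*) [CommRing R] (n : ℕ) : Rn R n :=
  Ideal.Quotient.mk _ X

/-- `R[k] = R[n]/(t^k)` as an `R[n]`-module (for `k ≤ n` this is `R[t]/(t^k)`
with the `R[n]`-module structure coming from the natural surjection `R[n] → R[k]`). -/
abbrev Rmod (R : Type*) [CommRing R] (n k : ℕ) : Type _ :=
  Rn R n ⧸ (Ideal.span {tn R n ^ k})

/-- The constant term homomorphism `R[n] → R` (for `n > 0`). -/
def ct (R : Type*) [CommRing R] (n : ℕ) (hn : 0 < n) : Rn R n →+* R :=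
  Ideal.Quotient.lift _ (evalRingHom 0) (by
    intro a ha
    rw [Ideal.mem_span_singleton] at ha
    obtain ⟨c, rfl⟩ := ha
    simp [zero_pow hn.ne'])

section Modules

variable (R : Type*) [CommRing R] (n : ℕ) (M : Type*) [AddCommGroup M] [Module (Rn R n) M]

/-- The submodule `M_i = t^i M` of an `R[n]`-module `M`. -/
def tMi (i : ℕ) : Submodule (Rn R n) M :=
  LinearMap.range (LinearMap.lsmul (Rn R n) M (tn R n ^ i))

/-- The submodule `M^{(i)} = {m ∈ M : t^i m = 0}` of an `R[n]`-module `M`. -/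
def kt (i : ℕ) : Submodule (Rn R n) M :=
  LinearMap.ker (LinearMap.lsmul (Rn R n) M (tn R n ^ i))

/-- `G_i(M) = t^i M / t^{i+1} M`. -/
abbrev Gi (i : ℕ) :=
  (tMi R n M i) ⧸ (Submodule.comap (tMi R n M i).subtype (tMi R n M (i + 1)))

/-- `G^{(i+1)}(M) = M^{(i+1)}/M^{(i)}` (note the shift by one in the indexing:
`Gup R n M i` is `G^{(i+1)}(M)`). -/
abbrev Gup (i : ℕ) :=
  (kt R n M (i + 1)) ⧸ (Submodule.comap (kt R n M (i + 1)).subtype (kt R n M i))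

lemma tMi_succ_mem {i : ℕ} {x : M} (hx : x ∈ tMi R n M i) :
    tn R n • x ∈ tMi R n M (i + 1) := by
  obtain ⟨m, rfl⟩ := hx
  exact ⟨m, by simp [LinearMap.lsmul_apply, smul_smul, pow_succ']⟩

lemma kt_pred_mem {i : ℕ} {x : M} (hx : x ∈ kt R n M (i + 1)) :
    tn R n • x ∈ kt R n M i := by
  simp only [kt, LinearMap.mem_ker, LinearMap.lsmul_apply] at hx ⊢
  rw [smul_smul, ← pow_succ]
  exact hx

/-- `μ_i : G_i(M) → G_{i+1}(M)`, induced by multiplication by `t`. -/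
def muMap (i : ℕ) : Gi R n M i →ₗ[Rn R n] Gi R n M (i + 1) :=
  Submodule.mapQ _ _
    (LinearMap.restrict (LinearMap.lsmul (Rn R n) M (tn R n))
      (fun _ hx => tMi_succ_mem R n M hx))
    (fun x hx => by
      simp only [Submodule.mem_comap] at hx ⊢
      exact tMi_succ_mem R n M hx)

/-- `λ_{i+1} : G^{(i+2)}(M) → G^{(i+1)}(M)`, induced by multiplication by `t`
(with the shifted indexing, `lamMap R n M i : Gup (i+1) → Gup i`). -/
def lamMap (i : ℕ) : Gup R n M (i + 1) →ₗ[Rn R n] Gup R n M i :=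
  Submodule.mapQ _ _
    (LinearMap.restrict (LinearMap.lsmul (Rn R n) M (tn R n))
      (fun _ hx => kt_pred_mem R n M hx))
    (fun x hx => by
      simp only [Submodule.mem_comap] at hx ⊢
      exact kt_pred_mem R n M hx)

/-- The composition `μ_{k-1} ∘ ... ∘ μ_0 : G_0(M) → G_k(M)`. -/
def muComp : (k : ℕ) → (Gi R n M 0 →ₗ[Rn R n] Gi R n M k)
  | 0 => LinearMap.id
  | (k + 1) => (muMap R n M k).comp (muComp k)

/-- The composition `λ_1 ∘ ... ∘ λ_k : G^{(k+1)}(M) → G^{(1)}(M)`. -/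
def lamComp : (k : ℕ) → (Gup R n M k →ₗ[Rn R n] Gup R n M 0)
  | 0 => LinearMap.id
  | (k + 1) => (lamComp k).comp (lamMap R n M k)

end Modules

lemma tf_smul_mem_kt {R : Type*} [CommRing R] {n : ℕ}
    {M : Type*} [AddCommGroup M] [Module (Rn R n) M]
    (hM : Submodule.torsion (Rn R n) M = ⊥)
    {a : Rn R n} (ha : a ∈ nonZeroDivisors (Rn R n))
    {m : M} {j : ℕ} (hm : a • m ∈ kt R n M j) : m ∈ kt R n M j := by
  simp only [kt, LinearMap.mem_ker, LinearMap.lsmul_apply] at hm ⊢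
  have h0 : a • (tn R n ^ j • m) = 0 := by
    rw [smul_smul, mul_comm, ← smul_smul, hm]
  have := (Submodule.eq_bot_iff _).mp hM (tn R n ^ j • m) ⟨⟨a, ha⟩, h0⟩
  exact this

/-- A finitely generated `R[n]`-module `M` is torsion free iff `M^{(1)} = {m : t m = 0}` is
torsion free; moreover if `M` is torsion free then, for every `1 ≤ i ≤ n`,
`G^{(i)}(M) = M^{(i)}/M^{(i-1)}` and `M/M^{(i)}` are torsion free. -/
theorem torsionFree_iff_kt_one_torsionFree
    {R : Type*} [CommRing R] [IsDomain R] [IsNoetherianRing R]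
    (n : ℕ) (hn : 0 < n)
    (M : Type*) [AddCommGroup M] [Module (Rn R n) M] [Module.Finite (Rn R n) M] :
    (Submodule.torsion (Rn R n) M = ⊥ ↔
        Submodule.torsion (Rn R n) (kt R n M 1) = ⊥) ∧
      (Submodule.torsion (Rn R n) M = ⊥ →
        ∀ i : ℕ, 1 ≤ i → i ≤ n →
          Submodule.torsion (Rn R n) (Gup R n M (i - 1)) = ⊥ ∧
          Submodule.torsion (Rn R n) (M ⧸ kt R n M i) = ⊥) := by
  have htn : (tn R n) ^ n = 0 := by
    rw [tn, ← map_pow]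
    exact Ideal.Quotient.eq_zero_iff_mem.mpr (Ideal.mem_span_singleton_self _)
  constructor
  · constructor
    · -- M torsion free → kt 1 torsion free
      intro hM
      rw [Submodule.eq_bot_iff]
      rintro x ⟨a, hax⟩
      have : (a : Rn R n) • (x : M) = 0 := by
        have := congrArg (Subtype.val) hax
        exact this
      have : (x : M) = 0 := (Submodule.eq_bot_iff _).mp hM _ ⟨a, this⟩
      exact Subtype.ext this
    · -- kt 1 torsion free → M torsion free
      intro h1
      rw [Submodule.eq_bot_iff]
      rintro x ⟨a, hax⟩
      -- prove by induction: ∀ k, tn^k • x = 0 → x = 0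
      have key : ∀ k : ℕ, (tn R n) ^ k • x = 0 → x = 0 := by
        intro k
        induction k with
        | zero => intro h; simpa using h
        | succ k ih =>
          intro h
          set y := (tn R n) ^ k • x with hy
          have hy1 : y ∈ kt R n M 1 := by
            simp only [kt, LinearMap.mem_ker, LinearMap.lsmul_apply, pow_one]
            rw [hy, smul_smul, ← pow_succ']
            exact h
          have hay : (a : Rn R n) • (⟨y, hy1⟩ : kt R n M 1) = 0 := by
            apply Subtype.ext
            show (a : Rn R n) • y = 0
            have hax' : (a : Rn R n) • x = 0 := hax
            rw [hy, smul_comm, hax', smul_zero]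
          have : (⟨y, hy1⟩ : kt R n M 1) = 0 :=
            (Submodule.eq_bot_iff _).mp h1 _ ⟨a, hay⟩
          exact ih (congrArg Subtype.val this)
      exact key n (by rw [htn]; exact zero_smul (Rn R n) x)
  · intro hM i hi1 _
    obtain ⟨j, rfl⟩ : ∃ j, i = j + 1 := ⟨i - 1, (Nat.succ_pred_eq_of_pos hi1).symm⟩
    constructor
    · -- Gup j = kt (j+1) / kt j torsion free
      rw [Submodule.eq_bot_iff]
      rintro x ⟨a, hax⟩
      obtain ⟨⟨m, hm⟩, rfl⟩ := Submodule.Quotient.mk_surjective _ x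
      rw [← Submodule.Quotient.mk_smul, Submodule.Quotient.mk_eq_zero] at hax
      have ham : (a : Rn R n) • m ∈ kt R n M j := hax
      have : m ∈ kt R n M j := tf_smul_mem_kt hM a.2 ham
      rw [Submodule.Quotient.mk_eq_zero]
      exact this
    · -- M / kt (j+1) torsion free
      rw [Submodule.eq_bot_iff]
      rintro x ⟨a, hax⟩
      obtain ⟨m, rfl⟩ := Submodule.Quotient.mk_surjective _ x
      rw [← Submodule.Quotient.mk_smul, Submodule.Quotient.mk_eq_zero] at hax
      rw [Submodule.Quotient.mk_eq_zero]
      exact tf_smul_mem_kt hM a.2 hax
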